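/- Let f:J→ℝ be continuous and GG-convex on an interval J⊆(0,∞), A an n×n Hermitian matrix with eigenvalues in J, and η a unit vector in ℂⁿ. Then f(exp⟨(log A)η,η⟩) ≤ exp⟨(log f(A))η,η⟩. -/
import Mathlib


open scoped ComplexInnerProductSpace

private lemma jensen_abs_rpow_le_exp (u α : ℝ) : |u ^ α| ≤ Real.exp (α * Real.log u) := by
  rcases eq_or_ne u 0 with rfl | hu
  · rcases eq_or_ne α 0 with rfl | hα
    · simp
    · rw [Real.zero_rpow hα]
      simp only [abs_zero]
      positivity
  · calc |u ^ α| ≤ |u| ^ α := Real.abs_rpow_le_abs_rpow u α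
      _ = Real.exp (Real.log |u| * α) := Real.rpow_def_of_pos (abs_pos.mpr hu) α
      _ = Real.exp (α * Real.log u) := by rw [Real.log_abs, mul_comm]

private lemma jensen_rpow_mul_rpow_le_exp (u v α β : ℝ) :
    u ^ α * v ^ β ≤ Real.exp (α * Real.log u + β * Real.log v) := by
  calc u ^ α * v ^ β ≤ |u ^ α * v ^ β| := le_abs_self _
    _ = |u ^ α| * |v ^ β| := abs_mul _ _
    _ ≤ Real.exp (α * Real.log u) * Real.exp (β * Real.log v) :=
        mul_le_mul (jensen_abs_rpow_le_exp u α) (jensen_abs_rpow_le_exp v β)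
          (abs_nonneg _) (Real.exp_pos _).le
    _ = Real.exp (α * Real.log u + β * Real.log v) := (Real.exp_add _ _).symm

private lemma jensen_chord_symm {φ : ℝ → ℝ} {t1 t2 y1 y2 : ℝ}
    (C : ∀ α ∈ Set.Icc (0:ℝ) 1, φ (α*t1 + (1-α)*t2) ≤ Real.exp (α*y1+(1-α)*y2)) :
    ∀ α ∈ Set.Icc (0:ℝ) 1, φ (α*t2 + (1-α)*t1) ≤ Real.exp (α*y2+(1-α)*y1) := by
  intro α hα
  have h := C (1-α) ⟨by linarith [hα.2], by linarith [hα.1]⟩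
  have e1 : (1-α)*t1 + (1-(1-α))*t2 = α*t2 + (1-α)*t1 := by ring
  have e2 : (1-α)*y1 + (1-(1-α))*y2 = α*y2 + (1-α)*y1 := by ring
  rwa [e1, e2] at h

set_option maxHeartbeats 1600000 in
private lemma jensen_tp_sorted (φ : ℝ → ℝ) (t1 t2 t3 y1 y2 y3 a b c x Y : ℝ)
    (h12 : t1 ≤ t2) (h23 : t2 ≤ t3)
    (C12 : ∀ α ∈ Set.Icc (0:ℝ) 1, φ (α*t1 + (1-α)*t2) ≤ Real.exp (α*y1+(1-α)*y2))
    (C13 : ∀ α ∈ Set.Icc (0:ℝ) 1, φ (α*t1 + (1-α)*t3) ≤ Real.exp (α*y1+(1-α)*y3))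
    (C23 : ∀ α ∈ Set.Icc (0:ℝ) 1, φ (α*t2 + (1-α)*t3) ≤ Real.exp (α*y2+(1-α)*y3))
    (ha : 0 ≤ a) (hb : 0 ≤ b) (hc : 0 ≤ c) (habc : a + b + c = 1)
    (hx : x = a*t1 + b*t2 + c*t3) (hY : Y = a*y1 + b*y2 + c*y3) :
    φ x ≤ Real.exp Y := by
  have hc' : c = 1 - a - b := by linarith
  subst hc'
  rcases eq_or_lt_of_le (h12.trans h23) with h13 | h13
  · -- all three points coincide
    have e2 : t2 = t1 := le_antisymm (h13 ▸ h23) h12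
    have e3 : t3 = t1 := h13.symm
    have hx1 : x = t1 := by rw [hx, e2, e3]; ring
    have p1 : φ t1 ≤ Real.exp y1 := by
      have h := C12 1 ⟨zero_le_one, le_rfl⟩; simpa using h
    have p2 : φ t1 ≤ Real.exp y2 := by
      have h := C12 0 ⟨le_rfl, zero_le_one⟩; simpa [e2] using h
    have p3 : φ t1 ≤ Real.exp y3 := by
      have h := C13 0 ⟨le_rfl, zero_le_one⟩; simpa [e3] using h
    set m := min y1 (min y2 y3) with hm
    have hm1 : m ≤ y1 := min_le_left _ _
    have hm2 : m ≤ y2 := le_trans (min_le_right _ _) (min_le_left _ _)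
    have hm3 : m ≤ y3 := le_trans (min_le_right _ _) (min_le_right _ _)
    have hmY : m ≤ Y := by
      rw [hY]
      nlinarith [mul_le_mul_of_nonneg_left hm1 ha, mul_le_mul_of_nonneg_left hm2 hb,
        mul_le_mul_of_nonneg_left hm3 hc]
    have hφ : φ t1 ≤ Real.exp m := by
      rcases le_total y1 (min y2 y3) with h | h
      · rw [hm, min_eq_left h]; exact p1
      · rw [hm, min_eq_right h]
        rcases le_total y2 y3 with h' | h'
        · rw [min_eq_left h']; exact p2
        · rw [min_eq_right h']; exact p3
    rw [hx1]
    exact hφ.trans (Real.exp_le_exp.2 hmY)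
  · have h31 : (0:ℝ) < t3 - t1 := by linarith
    rcases le_or_gt (y2*(t3-t1)) ((t3-t2)*y1 + (t2-t1)*y3) with hcase | hcase
    · -- middle point below (or on) the outer chord
      rcases le_total x t2 with hxle | hxge
      · -- x ∈ [t1, t2]
        rcases eq_or_lt_of_le h12 with e12 | h12'
        · -- t1 = t2
          rw [← e12] at hcase hxle
          have hy21 : y2 ≤ y1 := by
            have h' : y2*(t3-t1) ≤ y1*(t3-t1) := by linarith
            exact le_of_mul_le_mul_right h' h31
          have hx1 : t1 ≤ x := by
            rw [hx]
            nlinarith [mul_nonneg hb (sub_nonneg.2 h12), mul_nonneg hc (sub_nonneg.2 (h12.trans h23))]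
          have hxt : x = t1 := le_antisymm hxle hx1
          rw [← e12] at hx
          have h5 : (1-a-b)*(t3-t1) = 0 := by linear_combination hxt - hx
          have hc0 : 1-a-b = 0 := by
            rcases mul_eq_zero.mp h5 with h' | h'
            · exact h'
            · exact absurd h' h31.ne'
          have h0 : (1-a-b)*y3 = 0 := by rw [hc0]; ring
          have h00 : (1-a-b)*y2 = 0 := by rw [hc0]; ring
          have hY2 : y2 ≤ Y := by
            rw [hY]
            nlinarith [mul_le_mul_of_nonneg_left hy21 ha, h0, h00]
          have h := C12 0 ⟨le_rfl, zero_le_one⟩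
          have e : (0:ℝ)*t1 + (1-0)*t1 = t1 := by ring
          rw [← e12, e] at h
          rw [hxt]
          refine h.trans (Real.exp_le_exp.2 ?_)
          linarith
        · -- t1 < t2
          have h21 : (0:ℝ) < t2 - t1 := by linarith
          set α := (t2 - x)/(t2 - t1) with hα
          have hα0 : 0 ≤ α := div_nonneg (by linarith) h21.le
          have hx1 : t1 ≤ x := by
            rw [hx]
            nlinarith [mul_nonneg hb (sub_nonneg.2 h12), mul_nonneg hc (sub_nonneg.2 (h12.trans h23))]
          have hα1 : α ≤ 1 := by rw [hα, div_le_one h21]; linarith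
          have hm' : α*(t2-t1) = t2 - x := div_mul_cancel₀ _ h21.ne'
          have hxeq : x = α*t1 + (1-α)*t2 := by linear_combination hm'
          have hkey : Y*(t2-t1) - ((t2-x)*y1 + (x-t1)*y2)
              = (1-a-b)*((t3-t2)*y1 + (t2-t1)*y3 - y2*(t3-t1)) := by
            rw [hx, hY]; ring
          have hchordY : α*y1 + (1-α)*y2 ≤ Y := by
            have e : (α*y1 + (1-α)*y2)*(t2-t1) = (t2-x)*y1 + (x-t1)*y2 := by
              linear_combination (y1 - y2) * hm'
            have h' : (α*y1 + (1-α)*y2)*(t2-t1) ≤ Y*(t2-t1) := by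
              rw [e]
              nlinarith [mul_nonneg hc (sub_nonneg.2 hcase)]
            exact le_of_mul_le_mul_right h' h21
          have h := C12 α ⟨hα0, hα1⟩
          rw [hxeq]
          exact h.trans (Real.exp_le_exp.2 hchordY)
      · -- x ∈ [t2, t3]
        rcases eq_or_lt_of_le h23 with e23 | h23'
        · -- t2 = t3
          rw [← e23] at hcase
          have h21 : (0:ℝ) < t2 - t1 := by
            rw [← e23] at h13; linarith
          have hy23 : y2 ≤ y3 := by
            have h' : y2*(t2-t1) ≤ y3*(t2-t1) := by linarith
            exact le_of_mul_le_mul_right h' h21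
          have hx3 : x ≤ t2 := by
            rw [hx, ← e23]
            nlinarith [mul_nonneg ha (sub_nonneg.2 (h12.trans h23)), mul_nonneg hb (sub_nonneg.2 h23),
              mul_nonneg hc (sub_nonneg.2 (h12.trans h23)), mul_nonneg ha (sub_nonneg.2 h12)]
          have hxt : x = t2 := le_antisymm hx3 hxge
          rw [← e23] at hx
          have h5 : a*(t2-t1) = 0 := by linear_combination hx - hxt
          have ha0 : a = 0 := by
            rcases mul_eq_zero.mp h5 with h' | h'
            · exact h'
            · exact absurd h' h21.ne'
          have h0 : a*y1 = 0 := by rw [ha0]; ring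
          have h00 : a*y2 = 0 := by rw [ha0]; ring
          have hY2 : y2 ≤ Y := by
            rw [hY]
            nlinarith [mul_le_mul_of_nonneg_left hy23 (by linarith : (0:ℝ) ≤ 1-a-b), h0, h00]
          have h := C23 1 ⟨zero_le_one, le_rfl⟩
          have e : (1:ℝ)*t2 + (1-1)*t3 = t2 := by ring
          rw [e] at h
          rw [hxt]
          refine h.trans (Real.exp_le_exp.2 ?_)
          linarith
        · -- t2 < t3
          have h32 : (0:ℝ) < t3 - t2 := by linarith
          have hx3 : x ≤ t3 := by
            rw [hx]
            nlinarith [mul_nonneg ha (sub_nonneg.2 (h12.trans h23)), mul_nonneg hb (sub_nonneg.2 h23)]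
          set α := (t3 - x)/(t3 - t2) with hα
          have hα0 : 0 ≤ α := div_nonneg (by linarith) h32.le
          have hα1 : α ≤ 1 := by rw [hα, div_le_one h32]; linarith
          have hm' : α*(t3-t2) = t3 - x := div_mul_cancel₀ _ h32.ne'
          have hxeq : x = α*t2 + (1-α)*t3 := by linear_combination hm'
          have hchordY : α*y2 + (1-α)*y3 ≤ Y := by
            have e : (α*y2 + (1-α)*y3)*(t3-t2) = (t3-x)*y2 + (x-t2)*y3 := by
              linear_combination (y2 - y3) * hm'
            have hkey : Y*(t3-t2) - ((t3-x)*y2 + (x-t2)*y3)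
                = a*((t3-t2)*y1 + (t2-t1)*y3 - y2*(t3-t1)) := by
              rw [hx, hY]; ring
            have h' : (α*y2 + (1-α)*y3)*(t3-t2) ≤ Y*(t3-t2) := by
              rw [e]
              nlinarith [mul_nonneg ha (sub_nonneg.2 hcase)]
            exact le_of_mul_le_mul_right h' h32
          have h := C23 α ⟨hα0, hα1⟩
          rw [hxeq]
          exact h.trans (Real.exp_le_exp.2 hchordY)
    · -- middle point above the outer chord: drop it
      have hm' : ((t3-t2)/(t3-t1))*(t3-t1) = t3-t2 := div_mul_cancel₀ _ h31.ne'
      set β := (t3-t2)/(t3-t1) with hβ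
      set α := a + b*β with hα
      have hβ0 : 0 ≤ β := div_nonneg (by linarith) h31.le
      have hβ1 : β ≤ 1 := by rw [hβ, div_le_one h31]; linarith
      have hα0 : 0 ≤ α := add_nonneg ha (mul_nonneg hb hβ0)
      have hα1 : α ≤ 1 := by
        have h' := mul_le_mul_of_nonneg_left hβ1 hb
        rw [hα]; nlinarith
      have hxeq : x = α*t1 + (1-α)*t3 := by
        rw [hx, hα]; linear_combination b * hm'
      have hYge : α*y1 + (1-α)*y3 ≤ Y := by
        have e : (α*y1 + (1-α)*y3)*(t3-t1) = (a*(t3-t1) + b*(t3-t2))*y1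
            + ((1-a-b)*(t3-t1) + b*(t2-t1))*y3 := by
          rw [hα]; linear_combination (b*y1 - b*y3) * hm'
        have h' : (α*y1 + (1-α)*y3)*(t3-t1) ≤ Y*(t3-t1) := by
          rw [e, hY]
          nlinarith [mul_nonneg hb (sub_nonneg.2 hcase.le)]
        exact le_of_mul_le_mul_right h' h31
      have h := C13 α ⟨hα0, hα1⟩
      rw [hxeq]
      exact h.trans (Real.exp_le_exp.2 hYge)

private lemma jensen_tp (φ : ℝ → ℝ) (t1 t2 t3 y1 y2 y3 a b c x Y : ℝ)
    (C12 : ∀ α ∈ Set.Icc (0:ℝ) 1, φ (α*t1 + (1-α)*t2) ≤ Real.exp (α*y1+(1-α)*y2))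
    (C13 : ∀ α ∈ Set.Icc (0:ℝ) 1, φ (α*t1 + (1-α)*t3) ≤ Real.exp (α*y1+(1-α)*y3))
    (C23 : ∀ α ∈ Set.Icc (0:ℝ) 1, φ (α*t2 + (1-α)*t3) ≤ Real.exp (α*y2+(1-α)*y3))
    (ha : 0 ≤ a) (hb : 0 ≤ b) (hc : 0 ≤ c) (habc : a + b + c = 1)
    (hx : x = a*t1 + b*t2 + c*t3) (hY : Y = a*y1 + b*y2 + c*y3) :
    φ x ≤ Real.exp Y := by
  rcases le_total t1 t2 with h12 | h21
  · rcases le_total t2 t3 with h23 | h32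
    · exact jensen_tp_sorted φ t1 t2 t3 y1 y2 y3 a b c x Y h12 h23 C12 C13 C23
        ha hb hc habc hx hY
    · rcases le_total t1 t3 with h13 | h31
      · exact jensen_tp_sorted φ t1 t3 t2 y1 y3 y2 a c b x Y h13 h32 C13 C12
          (jensen_chord_symm C23) ha hc hb (by linarith) (by rw [hx]; ring) (by rw [hY]; ring)
      · exact jensen_tp_sorted φ t3 t1 t2 y3 y1 y2 c a b x Y h31 h12
          (jensen_chord_symm C13) (jensen_chord_symm C23) C12 hc ha hb (by linarith)
          (by rw [hx]; ring) (by rw [hY]; ring)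
  · rcases le_total t1 t3 with h13 | h31
    · exact jensen_tp_sorted φ t2 t1 t3 y2 y1 y3 b a c x Y h21 h13
        (jensen_chord_symm C12) C23 C13 hb ha hc (by linarith) (by rw [hx]; ring)
        (by rw [hY]; ring)
    · rcases le_total t2 t3 with h23 | h32
      · exact jensen_tp_sorted φ t2 t3 t1 y2 y3 y1 b c a x Y h23 h31 C23
          (jensen_chord_symm C12) (jensen_chord_symm C13) hb hc ha (by linarith)
          (by rw [hx]; ring) (by rw [hY]; ring)
      · exact jensen_tp_sorted φ t3 t2 t1 y3 y2 y1 c b a x Y h32 h21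
          (jensen_chord_symm C23) (jensen_chord_symm C13) (jensen_chord_symm C12) hc hb ha
          (by linarith) (by rw [hx]; ring) (by rw [hY]; ring)

set_option maxHeartbeats 1600000 in
private lemma jensen_npoint (φ : ℝ → ℝ) :
    ∀ (k : ℕ) {ι : Type} [DecidableEq ι] (s : Finset ι), s.card ≤ k →
      ∀ (t y w : ι → ℝ), (∀ i ∈ s, 0 ≤ w i) → (∑ i ∈ s, w i) = 1 →
      (∀ i ∈ s, ∀ j ∈ s, ∀ α ∈ Set.Icc (0:ℝ) 1,
        φ (α * t i + (1-α) * t j) ≤ Real.exp (α * y i + (1-α) * y j)) →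
      φ (∑ i ∈ s, w i * t i) ≤ Real.exp (∑ i ∈ s, w i * y i) := by
  intro k
  induction k with
  | zero =>
      intro ι _ s hs t y w hw hsum C
      have hse : s = ∅ := Finset.card_eq_zero.mp (Nat.le_zero.mp hs)
      subst hse
      simp at hsum
  | succ k IH =>
      intro ι _ s hs t y w hw hsum C
      by_cases h1 : s.card ≤ 1
      · -- singleton case
        have hne : s.Nonempty := by
          by_contra h
          rw [Finset.not_nonempty_iff_eq_empty] at h
          subst h; simp at hsum
        have hcard : s.card = 1 := le_antisymm h1 (Finset.card_pos.mpr hne)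
        obtain ⟨i, rfl⟩ := Finset.card_eq_one.mp hcard
        simp only [Finset.sum_singleton] at hsum ⊢
        rw [hsum]
        have h := C i (Finset.mem_singleton_self i) i (Finset.mem_singleton_self i) 1
          ⟨zero_le_one, le_rfl⟩
        have e1 : (1:ℝ) * t i + (1-1) * t i = 1 * t i := by ring
        have e2 : (1:ℝ) * y i + (1-1) * y i = 1 * y i := by ring
        rw [e1, e2] at h
        exact h
      · push_neg at h1
        by_cases hz : ∃ j ∈ s, w j = 0
        · -- drop a zero-weight point
          obtain ⟨j, hj, hwj⟩ := hz
          have hcard : (s.erase j).card ≤ k := by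
            rw [Finset.card_erase_of_mem hj]; omega
          have hsum' : ∑ i ∈ s.erase j, w i = 1 := by
            rw [← Finset.add_sum_erase s w hj, hwj, zero_add] at hsum
            exact hsum
          have h := IH (s.erase j) hcard t y w
            (fun i hi => hw i (Finset.mem_of_mem_erase hi)) hsum'
            (fun p hp q hq => C p (Finset.mem_of_mem_erase hp) q (Finset.mem_of_mem_erase hq))
          have e1 : ∑ i ∈ s, w i * t i = ∑ i ∈ s.erase j, w i * t i := by
            rw [← Finset.add_sum_erase s (fun i => w i * t i) hj, hwj, zero_mul, zero_add]
          have e2 : ∑ i ∈ s, w i * y i = ∑ i ∈ s.erase j, w i * y i := by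
            rw [← Finset.add_sum_erase s (fun i => w i * y i) hj, hwj, zero_mul, zero_add]
          rw [e1, e2]
          exact h
        · -- all weights positive: merge two points
          push_neg at hz
          obtain ⟨i, hi, j, hj, hij⟩ := Finset.one_lt_card.mp h1
          have hwi : 0 < w i := lt_of_le_of_ne (hw i hi) (Ne.symm (hz i hi))
          have hwj : 0 < w j := lt_of_le_of_ne (hw j hj) (Ne.symm (hz j hj))
          set W := w i + w j with hW
          have hWpos : 0 < W := add_pos hwi hwj
          set μ := w i / W with hμ
          have hμ0 : 0 ≤ μ := div_nonneg hwi.le hWpos.le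
          have hμ1 : μ ≤ 1 := by rw [hμ, div_le_one hWpos]; linarith
          have hm' : μ * W = w i := by rw [hμ]; exact div_mul_cancel₀ _ hWpos.ne'
          set τ := μ * t i + (1-μ) * t j with hτ
          set υ := μ * y i + (1-μ) * y j with hυ
          set t' := Function.update t i τ with ht'
          set y' := Function.update y i υ with hy'
          set w' := Function.update w i W with hw'
          have hij' : i ∈ s.erase j := Finset.mem_erase.mpr ⟨hij, hi⟩
          have hcard : (s.erase j).card ≤ k := by
            rw [Finset.card_erase_of_mem hj]; omega
          have inner_split : ∀ f : ι → ℝ,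
              ∑ p ∈ s, f p = f j + (f i + ∑ p ∈ s.erase j \ {i}, f p) := by
            intro f
            rw [← Finset.erase_eq]
            rw [Finset.add_sum_erase _ _ hij', Finset.add_sum_erase _ _ hj]
          have upd_mul : ∀ (g : ι → ℝ) (τ₀ : ℝ) (p : ι),
              Function.update w i W p * Function.update g i τ₀ p
                = Function.update (fun q => w q * g q) i (W * τ₀) p := by
            intro g τ₀ p
            by_cases hpi : p = i
            · subst hpi; simp
            · simp [Function.update_of_ne hpi]
          have sum_t : ∑ p ∈ s.erase j, w' p * t' p = ∑ p ∈ s, w p * t p := by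
            rw [hw', ht', Finset.sum_congr rfl (fun p _ => upd_mul t τ p),
              Finset.sum_update_of_mem hij', inner_split (fun q => w q * t q)]
            have e : W * τ = w i * t i + w j * t j := by
              rw [hτ, hW]
              rw [hW] at hm'
              linear_combination (t i - t j) * hm'
            rw [e]; ring
          have sum_y : ∑ p ∈ s.erase j, w' p * y' p = ∑ p ∈ s, w p * y p := by
            rw [hw', hy', Finset.sum_congr rfl (fun p _ => upd_mul y υ p),
              Finset.sum_update_of_mem hij', inner_split (fun q => w q * y q)]
            have e : W * υ = w i * y i + w j * y j := by
              rw [hυ, hW]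
              rw [hW] at hm'
              linear_combination (y i - y j) * hm'
            rw [e]; ring
          have sum_w : ∑ p ∈ s.erase j, w' p = 1 := by
            rw [hw', Finset.sum_update_of_mem hij']
            have h2 := inner_split w
            rw [h2] at hsum
            rw [hW]; linarith
          have hw'' : ∀ p ∈ s.erase j, 0 ≤ w' p := by
            intro p hp
            by_cases hpi : p = i
            · subst hpi; rw [hw']; simp [hWpos.le]
            · rw [hw', Function.update_of_ne hpi]
              exact hw p (Finset.mem_of_mem_erase hp)
          have C' : ∀ p ∈ s.erase j, ∀ q ∈ s.erase j, ∀ α ∈ Set.Icc (0:ℝ) 1,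
              φ (α * t' p + (1-α) * t' q) ≤ Real.exp (α * y' p + (1-α) * y' q) := by
            intro p hp q hq α hα
            obtain ⟨hα0, hα1⟩ := hα
            have hps : p ∈ s := Finset.mem_of_mem_erase hp
            have hqs : q ∈ s := Finset.mem_of_mem_erase hq
            by_cases hpi : p = i <;> by_cases hqi : q = i
            · rw [hpi, hqi, ht', hy']
              simp only [Function.update_self]
              have h := C i hi j hj μ ⟨hμ0, hμ1⟩
              have e1 : α*τ + (1-α)*τ = μ * t i + (1-μ) * t j := by rw [hτ]; ring
              have e2 : α*υ + (1-α)*υ = μ * y i + (1-μ) * y j := by rw [hυ]; ring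
              rw [e1, e2]
              exact h
            · rw [hpi, ht', hy']
              simp only [Function.update_self, Function.update_of_ne hqi]
              exact jensen_tp φ (t i) (t j) (t q) (y i) (y j) (y q) (α*μ) (α*(1-μ)) (1-α) _ _
                (fun β hβ => C i hi j hj β hβ) (fun β hβ => C i hi q hqs β hβ)
                (fun β hβ => C j hj q hqs β hβ)
                (mul_nonneg hα0 hμ0) (mul_nonneg hα0 (by linarith)) (by linarith)
                (by ring) (by rw [hτ]; ring) (by rw [hυ]; ring)
            · rw [hqi, ht', hy']
              simp only [Function.update_self, Function.update_of_ne hpi]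
              exact jensen_tp φ (t p) (t i) (t j) (y p) (y i) (y j) α ((1-α)*μ) ((1-α)*(1-μ)) _ _
                (fun β hβ => C p hps i hi β hβ) (fun β hβ => C p hps j hj β hβ)
                (fun β hβ => C i hi j hj β hβ)
                hα0 (mul_nonneg (by linarith) hμ0) (mul_nonneg (by linarith) (by linarith))
                (by ring) (by rw [hτ]; ring) (by rw [hυ]; ring)
            · rw [ht', hy']
              simp only [Function.update_of_ne hpi, Function.update_of_ne hqi]
              exact C p hps q hqs α ⟨hα0, hα1⟩
          have h := IH (s.erase j) hcard t' y' w' hw'' sum_w C'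
          rw [← sum_t, ← sum_y]
          exact h

/-- Matrix Jensen inequality for GG-convex functions.  For a Hermitian matrix
`A = ∑ λᵢ Pᵢ` and a unit vector `η`, the inner products `⟨(log A)η, η⟩` and
`⟨(log f(A))η, η⟩` are expressed via the spectral decomposition as
`∑ ‖⟨uᵢ, η⟩‖² log λᵢ` and `∑ ‖⟨uᵢ, η⟩‖² log f(λᵢ)`, `uᵢ` an orthonormal
eigenbasis. -/
theorem matrix_jensen_gg (J : Set ℝ) (hJ : J ⊆ Set.Ioi (0:ℝ))
    (f : ℝ → ℝ) (hfc : ContinuousOn f J)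
    (hGG : ∀ x ∈ J, ∀ y ∈ J, ∀ α ∈ Set.Icc (0:ℝ) 1,
      f (x ^ α * y ^ (1 - α)) ≤ f x ^ α * f y ^ (1 - α))
    {n : ℕ} (A : Matrix (Fin n) (Fin n) ℂ) (hA : A.IsHermitian)
    (hspec : ∀ i, hA.eigenvalues i ∈ J)
    (η : EuclideanSpace ℂ (Fin n)) (hη : ‖η‖ = 1) :
    f (Real.exp (∑ i, ‖⟪hA.eigenvectorBasis i, η⟫‖ ^ 2 * Real.log (hA.eigenvalues i))) ≤
      Real.exp (∑ i, ‖⟪hA.eigenvectorBasis i, η⟫‖ ^ 2 * Real.log (f (hA.eigenvalues i))) := by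
  have hsum : ∑ i, ‖⟪hA.eigenvectorBasis i, η⟫‖ ^ 2 = 1 := by
    have h1 : ∀ i, hA.eigenvectorBasis.repr η i = ⟪hA.eigenvectorBasis i, η⟫ := fun i =>
      hA.eigenvectorBasis.repr_apply_apply η i
    have h2 : ‖hA.eigenvectorBasis.repr η‖ = 1 := by
      rw [LinearIsometryEquiv.norm_map]; exact hη
    rw [EuclideanSpace.norm_eq] at h2
    have h4 : ∑ i, ‖hA.eigenvectorBasis.repr η i‖ ^ 2 = 1 := Real.sqrt_eq_one.mp h2
    simp_rw [h1] at h4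
    exact h4
  have C : ∀ i ∈ (Finset.univ : Finset (Fin n)), ∀ j ∈ (Finset.univ : Finset (Fin n)),
      ∀ α ∈ Set.Icc (0:ℝ) 1,
      (fun r => f (Real.exp r)) (α * Real.log (hA.eigenvalues i)
          + (1-α) * Real.log (hA.eigenvalues j))
        ≤ Real.exp (α * Real.log (f (hA.eigenvalues i))
          + (1-α) * Real.log (f (hA.eigenvalues j))) := by
    intro i _ j _ α hα
    obtain ⟨hα0, hα1⟩ := hα
    have hli : (0:ℝ) < hA.eigenvalues i := hJ (hspec i)
    have hlj : (0:ℝ) < hA.eigenvalues j := hJ (hspec j)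
    have harg : Real.exp (α * Real.log (hA.eigenvalues i) + (1-α) * Real.log (hA.eigenvalues j))
        = hA.eigenvalues i ^ α * hA.eigenvalues j ^ (1-α) := by
      rw [Real.exp_add, Real.rpow_def_of_pos hli, Real.rpow_def_of_pos hlj,
        mul_comm (Real.log (hA.eigenvalues i)) α, mul_comm (Real.log (hA.eigenvalues j)) (1-α)]
    show f (Real.exp (α * Real.log (hA.eigenvalues i) + (1-α) * Real.log (hA.eigenvalues j))) ≤ _
    rw [harg]
    exact (hGG _ (hspec i) _ (hspec j) α ⟨hα0, hα1⟩).trans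
      (jensen_rpow_mul_rpow_le_exp _ _ _ _)
  exact jensen_npoint (fun r => f (Real.exp r)) n Finset.univ (by simp)
    (fun i => Real.log (hA.eigenvalues i)) (fun i => Real.log (f (hA.eigenvalues i)))
    (fun i => ‖⟪hA.eigenvectorBasis i, η⟫‖ ^ 2)
    (fun i _ => by positivity) hsum C
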